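/- Let * be a star product on A[[ν]] adapted to an ideal I of A, and let ρ be its canonical representation on A[[ν]]/I[[ν]]. Define the *-idealizer N_*(I) := { h ∈ A[[ν]] : g*h ∈ I[[ν]] for all g ∈ I[[ν]] }. Then: (a) N_*(I) is a unital subalgebra of (A[[ν]],*) containing I[[ν]] as a two-sided ideal; (b) the commutant of the representation, i.e. the algebra of all K[[ν]]-linear endomorphisms D of A[[ν]]/I[[ν]] commuting with every ρ(f), is isomorphic as a K[[ν]]-algebra to the opposite algebra of the quotient N_*(I)/I[[ν]], via h ↦ D_h where D_h(f + I[[ν]]) := (f*h) + I[[ν]]. -/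

import Mathlib

open Finset PowerSeries

/-- A formal deformation (star product) of a commutative unital `K`-algebra `A`. -/
structure StarProd (K A : Type*) [Field K] [CommRing A] [Algebra K A] where
  C : ℕ → A →ₗ[K] A →ₗ[K] A
  C_zero : ∀ f g : A, C 0 f g = f * g
  C_one_left : ∀ r : ℕ, 0 < r → ∀ f : A, C r 1 f = 0
  C_one_right : ∀ r : ℕ, 0 < r → ∀ f : A, C r f 1 = 0
  assoc : ∀ (t : ℕ) (f g h : A),
    ∑ p ∈ Finset.HasAntidiagonal.antidiagonal t, C p.1 (C p.2 f g) h
      = ∑ p ∈ Finset.HasAntidiagonal.antidiagonal t, C p.1 f (C p.2 g h)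

namespace StarProd

variable {K A : Type*} [Field K] [CommRing A] [Algebra K A]

/-- The induced `K[[ν]]`-bilinear multiplication `f * g = ∑ ν^r C_r(f,g)` on `A[[ν]]`. -/
noncomputable def mul (D : StarProd K A) (f g : PowerSeries A) : PowerSeries A :=
  PowerSeries.mk fun t =>
    ∑ p ∈ Finset.HasAntidiagonal.antidiagonal t, ∑ q ∈ Finset.HasAntidiagonal.antidiagonal p.2,
      D.C p.1 (PowerSeries.coeff q.1 f) (PowerSeries.coeff q.2 g)

end StarProd

/-- `I[[ν]]`: the formal power series all of whose coefficients lie in the ideal `I`. -/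
def idealSeries {A : Type*} [CommRing A] (I : Ideal A) : Ideal (PowerSeries A) where
  carrier := {x | ∀ n, PowerSeries.coeff n x ∈ I}
  add_mem' hx hy n := by
    rw [map_add]; exact I.add_mem (hx n) (hy n)
  zero_mem' n := by
    rw [map_zero]; exact I.zero_mem
  smul_mem' c x hx := by
    intro n
    rw [smul_eq_mul, PowerSeries.coeff_mul]
    exact Ideal.sum_mem I fun p _ => I.mul_mem_left _ (hx p.2)


namespace StarProd
variable {K A : Type*} [Field K] [CommRing A] [Algebra K A] (D : StarProd K A)

lemma coeff_mul' (f g : PowerSeries A) (t : ℕ) :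
    PowerSeries.coeff t (D.mul f g) =
      ∑ p ∈ Finset.HasAntidiagonal.antidiagonal t, ∑ q ∈ Finset.HasAntidiagonal.antidiagonal p.2,
        D.C p.1 (PowerSeries.coeff q.1 f) (PowerSeries.coeff q.2 g) := by
  simp [StarProd.mul]

lemma mul_add_right (f g g' : PowerSeries A) :
    D.mul f (g + g') = D.mul f g + D.mul f g' := by
  ext t
  simp [coeff_mul', Finset.sum_add_distrib]

lemma mul_add_left (f f' g : PowerSeries A) :
    D.mul (f + f') g = D.mul f g + D.mul f' g := by
  ext t
  simp [coeff_mul', Finset.sum_add_distrib]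

lemma mul_sub_right (f g g' : PowerSeries A) :
    D.mul f (g - g') = D.mul f g - D.mul f g' := by
  ext t
  simp [coeff_mul', Finset.sum_sub_distrib]

lemma mul_sub_left (f f' g : PowerSeries A) :
    D.mul (f - f') g = D.mul f g - D.mul f' g := by
  ext t
  simp [coeff_mul', Finset.sum_sub_distrib]

end StarProd

namespace StarProd
variable {K A : Type*} [Field K] [CommRing A] [Algebra K A] (D : StarProd K A)

lemma mul_one' (f : PowerSeries A) : D.mul f 1 = f := by
  ext t
  rw [coeff_mul']
  rw [Finset.sum_eq_single (0, t)]
  · rw [Finset.sum_eq_single (t, 0)]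
    · simp [D.C_zero]
    · intro q hq hne
      rcases Nat.eq_zero_or_pos q.2 with h0 | hpos
      · exfalso; apply hne
        have := Finset.HasAntidiagonal.mem_antidiagonal.mp hq
        ext <;> omega
      · rw [PowerSeries.coeff_one, if_neg (by omega)]
        simp
    · intro h; exact absurd (Finset.HasAntidiagonal.mem_antidiagonal.mpr (by omega)) h
  · intro p hp hne
    have hm := Finset.HasAntidiagonal.mem_antidiagonal.mp hp
    have hpos : 0 < p.1 := by
      rcases Nat.eq_zero_or_pos p.1 with h0 | h; · exact absurd (by ext <;> omega) hne
      exact h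
    apply Finset.sum_eq_zero
    intro q hq
    rcases Nat.eq_zero_or_pos q.2 with h0 | hq2
    · rw [h0, PowerSeries.coeff_one, if_pos rfl]
      exact D.C_one_right p.1 hpos _
    · rw [PowerSeries.coeff_one, if_neg (by omega)]
      simp
  · intro h; exact absurd (Finset.HasAntidiagonal.mem_antidiagonal.mpr (by omega)) h

lemma one_mul' (f : PowerSeries A) : D.mul 1 f = f := by
  ext t
  rw [coeff_mul']
  rw [Finset.sum_eq_single (0, t)]
  · rw [Finset.sum_eq_single (0, t)]
    · simp [D.C_zero]
    · intro q hq hne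
      rcases Nat.eq_zero_or_pos q.1 with h0 | hpos
      · exfalso; apply hne
        have := Finset.HasAntidiagonal.mem_antidiagonal.mp hq
        ext <;> omega
      · rw [PowerSeries.coeff_one, if_neg (by omega)]
        simp
    · intro h; exact absurd (Finset.HasAntidiagonal.mem_antidiagonal.mpr (by omega)) h
  · intro p hp hne
    have hm := Finset.HasAntidiagonal.mem_antidiagonal.mp hp
    have hpos : 0 < p.1 := by
      rcases Nat.eq_zero_or_pos p.1 with h0 | h; · exact absurd (by ext <;> omega) hne
      exact h
    apply Finset.sum_eq_zero
    intro q hq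
    rcases Nat.eq_zero_or_pos q.1 with h0 | hq1
    · rw [h0, PowerSeries.coeff_one, if_pos rfl]
      simp [D.C_one_left p.1 hpos]
    · rw [PowerSeries.coeff_one, if_neg (by omega)]
      simp
  · intro h; exact absurd (Finset.HasAntidiagonal.mem_antidiagonal.mpr (by omega)) h

end StarProd
section Reindex
set_option linter.unnecessarySeqFocus false
variable {M : Type*} [AddCommMonoid M]

lemma sum4_reindexL (t : ℕ) (F : ℕ → ℕ → ℕ → ℕ → ℕ → M) :
    (∑ p ∈ antidiagonal t, ∑ q ∈ antidiagonal p.2, ∑ u ∈ antidiagonal q.1,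
        ∑ v ∈ antidiagonal u.2, F p.1 u.1 v.1 v.2 q.2)
      = ∑ s ∈ antidiagonal t, ∑ a ∈ antidiagonal s.2, ∑ b ∈ antidiagonal a.2,
          ∑ p ∈ antidiagonal s.1, F p.1 p.2 a.1 b.1 b.2 := by
  have hL : (∑ p ∈ antidiagonal t, ∑ q ∈ antidiagonal p.2, ∑ u ∈ antidiagonal q.1,
        ∑ v ∈ antidiagonal u.2, F p.1 u.1 v.1 v.2 q.2)
      = ∑ x ∈ (antidiagonal t).sigma (fun p => (antidiagonal p.2).sigma (fun q =>
          (antidiagonal q.1).sigma (fun u => antidiagonal u.2))),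
          F x.1.1 x.2.2.1.1 x.2.2.2.1 x.2.2.2.2 x.2.1.2 := by
    simp only [Finset.sum_sigma]
  have hR : (∑ s ∈ antidiagonal t, ∑ a ∈ antidiagonal s.2, ∑ b ∈ antidiagonal a.2,
          ∑ p ∈ antidiagonal s.1, F p.1 p.2 a.1 b.1 b.2)
      = ∑ x ∈ (antidiagonal t).sigma (fun s => (antidiagonal s.2).sigma (fun a =>
          (antidiagonal a.2).sigma (fun _ => antidiagonal s.1))),
          F x.2.2.2.1 x.2.2.2.2 x.2.1.1 x.2.2.1.1 x.2.2.1.2 := by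
    simp only [Finset.sum_sigma]
  rw [hL, hR]
  refine Finset.sum_nbij'
    (fun x => ⟨(x.1.1 + x.2.2.1.1, x.2.2.2.1 + x.2.2.2.2 + x.2.1.2),
      (x.2.2.2.1, x.2.2.2.2 + x.2.1.2), (x.2.2.2.2, x.2.1.2), (x.1.1, x.2.2.1.1)⟩)
    (fun y => ⟨(y.2.2.2.1, y.2.2.2.2 + y.2.1.1 + y.2.2.1.1 + y.2.2.1.2),
      (y.2.2.2.2 + y.2.1.1 + y.2.2.1.1, y.2.2.1.2), (y.2.2.2.2, y.2.1.1 + y.2.2.1.1),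
      (y.2.1.1, y.2.2.1.1)⟩)
    ?_ ?_ ?_ ?_ ?_
  · rintro ⟨⟨p1,p2⟩, ⟨q1,q2⟩, ⟨u1,u2⟩, v1, v2⟩ hx
    simp only [Finset.mem_sigma, Finset.HasAntidiagonal.mem_antidiagonal, and_true, true_and] at hx ⊢
    omega
  · rintro ⟨⟨s1,s2⟩, ⟨a1,a2⟩, ⟨b1,b2⟩, p1, p2⟩ hy
    simp only [Finset.mem_sigma, Finset.HasAntidiagonal.mem_antidiagonal, and_true, true_and] at hy ⊢
    omega
  · rintro ⟨⟨p1,p2⟩, ⟨q1,q2⟩, ⟨u1,u2⟩, v1, v2⟩ hx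
    simp only [Finset.mem_sigma, Finset.HasAntidiagonal.mem_antidiagonal] at hx
    ext <;> simp <;> omega
  · rintro ⟨⟨s1,s2⟩, ⟨a1,a2⟩, ⟨b1,b2⟩, p1, p2⟩ hy
    simp only [Finset.mem_sigma, Finset.HasAntidiagonal.mem_antidiagonal] at hy
    ext <;> simp <;> omega
  · rintro ⟨⟨p1,p2⟩, ⟨q1,q2⟩, ⟨u1,u2⟩, v1, v2⟩ hx
    rfl

lemma sum4_reindexR (t : ℕ) (F : ℕ → ℕ → ℕ → ℕ → ℕ → M) :
    (∑ p ∈ antidiagonal t, ∑ q ∈ antidiagonal p.2, ∑ u ∈ antidiagonal q.2,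
        ∑ v ∈ antidiagonal u.2, F p.1 q.1 u.1 v.1 v.2)
      = ∑ s ∈ antidiagonal t, ∑ a ∈ antidiagonal s.2, ∑ b ∈ antidiagonal a.2,
          ∑ p ∈ antidiagonal s.1, F p.1 a.1 p.2 b.1 b.2 := by
  have hL : (∑ p ∈ antidiagonal t, ∑ q ∈ antidiagonal p.2, ∑ u ∈ antidiagonal q.2,
        ∑ v ∈ antidiagonal u.2, F p.1 q.1 u.1 v.1 v.2)
      = ∑ x ∈ (antidiagonal t).sigma (fun p => (antidiagonal p.2).sigma (fun q =>
          (antidiagonal q.2).sigma (fun u => antidiagonal u.2))),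
          F x.1.1 x.2.1.1 x.2.2.1.1 x.2.2.2.1 x.2.2.2.2 := by
    simp only [Finset.sum_sigma]
  have hR : (∑ s ∈ antidiagonal t, ∑ a ∈ antidiagonal s.2, ∑ b ∈ antidiagonal a.2,
          ∑ p ∈ antidiagonal s.1, F p.1 a.1 p.2 b.1 b.2)
      = ∑ x ∈ (antidiagonal t).sigma (fun s => (antidiagonal s.2).sigma (fun a =>
          (antidiagonal a.2).sigma (fun _ => antidiagonal s.1))),
          F x.2.2.2.1 x.2.1.1 x.2.2.2.2 x.2.2.1.1 x.2.2.1.2 := by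
    simp only [Finset.sum_sigma]
  rw [hL, hR]
  refine Finset.sum_nbij'
    (fun x => ⟨(x.1.1 + x.2.2.1.1, x.2.1.1 + x.2.2.2.1 + x.2.2.2.2),
      (x.2.1.1, x.2.2.2.1 + x.2.2.2.2), (x.2.2.2.1, x.2.2.2.2), (x.1.1, x.2.2.1.1)⟩)
    (fun y => ⟨(y.2.2.2.1, y.2.1.1 + y.2.2.2.2 + y.2.2.1.1 + y.2.2.1.2),
      (y.2.1.1, y.2.2.2.2 + y.2.2.1.1 + y.2.2.1.2), (y.2.2.2.2, y.2.2.1.1 + y.2.2.1.2),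
      (y.2.2.1.1, y.2.2.1.2)⟩)
    ?_ ?_ ?_ ?_ ?_
  · rintro ⟨⟨p1,p2⟩, ⟨q1,q2⟩, ⟨u1,u2⟩, v1, v2⟩ hx
    simp only [Finset.mem_sigma, Finset.HasAntidiagonal.mem_antidiagonal, and_true, true_and] at hx ⊢
    omega
  · rintro ⟨⟨s1,s2⟩, ⟨a1,a2⟩, ⟨b1,b2⟩, p1, p2⟩ hy
    simp only [Finset.mem_sigma, Finset.HasAntidiagonal.mem_antidiagonal, and_true, true_and] at hy ⊢
    omega
  · rintro ⟨⟨p1,p2⟩, ⟨q1,q2⟩, ⟨u1,u2⟩, v1, v2⟩ hx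
    simp only [Finset.mem_sigma, Finset.HasAntidiagonal.mem_antidiagonal] at hx
    ext <;> simp <;> omega
  · rintro ⟨⟨s1,s2⟩, ⟨a1,a2⟩, ⟨b1,b2⟩, p1, p2⟩ hy
    simp only [Finset.mem_sigma, Finset.HasAntidiagonal.mem_antidiagonal] at hy
    ext <;> simp <;> omega
  · rintro ⟨⟨p1,p2⟩, ⟨q1,q2⟩, ⟨u1,u2⟩, v1, v2⟩ hx
    rfl

end Reindex
namespace StarProd
variable {K A : Type*} [Field K] [CommRing A] [Algebra K A] (D : StarProd K A)

lemma mul_assoc' (f g h : PowerSeries A) :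
    D.mul (D.mul f g) h = D.mul f (D.mul g h) := by
  ext t
  rw [coeff_mul', coeff_mul']
  have hL : ∑ p ∈ antidiagonal t, ∑ q ∈ antidiagonal p.2,
      D.C p.1 (PowerSeries.coeff q.1 (D.mul f g)) (PowerSeries.coeff q.2 h)
      = ∑ p ∈ antidiagonal t, ∑ q ∈ antidiagonal p.2, ∑ u ∈ antidiagonal q.1,
          ∑ v ∈ antidiagonal u.2,
          D.C p.1 (D.C u.1 (PowerSeries.coeff v.1 f) (PowerSeries.coeff v.2 g))
            (PowerSeries.coeff q.2 h) := by
    refine Finset.sum_congr rfl fun p _ => Finset.sum_congr rfl fun q _ => ?_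
    rw [coeff_mul', map_sum, LinearMap.sum_apply]
    refine Finset.sum_congr rfl fun u _ => ?_
    rw [map_sum, LinearMap.sum_apply]
  have hR : ∑ p ∈ antidiagonal t, ∑ q ∈ antidiagonal p.2,
      D.C p.1 (PowerSeries.coeff q.1 f) (PowerSeries.coeff q.2 (D.mul g h))
      = ∑ p ∈ antidiagonal t, ∑ q ∈ antidiagonal p.2, ∑ u ∈ antidiagonal q.2,
          ∑ v ∈ antidiagonal u.2,
          D.C p.1 (PowerSeries.coeff q.1 f)
            (D.C u.1 (PowerSeries.coeff v.1 g) (PowerSeries.coeff v.2 h)) := by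
    refine Finset.sum_congr rfl fun p _ => Finset.sum_congr rfl fun q _ => ?_
    rw [coeff_mul', map_sum]
    refine Finset.sum_congr rfl fun u _ => ?_
    rw [map_sum]
  rw [hL, hR,
    sum4_reindexL t (fun w x y z v => D.C w (D.C x (PowerSeries.coeff y f)
      (PowerSeries.coeff z g)) (PowerSeries.coeff v h)),
    sum4_reindexR t (fun w x y z v => D.C w (PowerSeries.coeff x f)
      (D.C y (PowerSeries.coeff z g) (PowerSeries.coeff v h)))]
  refine Finset.sum_congr rfl fun s _ => Finset.sum_congr rfl fun a _ =>
    Finset.sum_congr rfl fun b _ => ?_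
  exact D.assoc s.1 _ _ _

end StarProd
section Reindex3
variable {M : Type*} [AddCommMonoid M]

lemma sum3_reindexR (t : ℕ) (G : ℕ → ℕ → ℕ → ℕ → M) :
    (∑ p ∈ antidiagonal t, ∑ q ∈ antidiagonal p.2, ∑ r ∈ antidiagonal q.2, G p.1 q.1 r.1 r.2)
      = ∑ r ∈ antidiagonal t, ∑ p ∈ antidiagonal r.2, ∑ q ∈ antidiagonal p.2,
          G p.1 q.1 r.1 q.2 := by
  have hL : (∑ p ∈ antidiagonal t, ∑ q ∈ antidiagonal p.2, ∑ r ∈ antidiagonal q.2,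
        G p.1 q.1 r.1 r.2)
      = ∑ x ∈ (antidiagonal t).sigma (fun p => (antidiagonal p.2).sigma (fun q =>
          antidiagonal q.2)), G x.1.1 x.2.1.1 x.2.2.1 x.2.2.2 := by
    simp only [Finset.sum_sigma]
  have hR : (∑ r ∈ antidiagonal t, ∑ p ∈ antidiagonal r.2, ∑ q ∈ antidiagonal p.2,
        G p.1 q.1 r.1 q.2)
      = ∑ y ∈ (antidiagonal t).sigma (fun r => (antidiagonal r.2).sigma (fun p =>
          antidiagonal p.2)), G y.2.1.1 y.2.2.1 y.1.1 y.2.2.2 := by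
    simp only [Finset.sum_sigma]
  rw [hL, hR]
  refine Finset.sum_nbij'
    (fun x => ⟨(x.2.2.1, x.1.1 + x.2.1.1 + x.2.2.2), (x.1.1, x.2.1.1 + x.2.2.2),
      (x.2.1.1, x.2.2.2)⟩)
    (fun y => ⟨(y.2.1.1, y.2.2.1 + y.2.2.2 + y.1.1), (y.2.2.1, y.2.2.2 + y.1.1),
      (y.1.1, y.2.2.2)⟩)
    ?_ ?_ ?_ ?_ ?_
  · rintro ⟨⟨p1,p2⟩, ⟨q1,q2⟩, r1, r2⟩ hx
    simp only [Finset.mem_sigma, Finset.HasAntidiagonal.mem_antidiagonal, and_true, true_and] at hx ⊢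
    omega
  · rintro ⟨⟨r1,r2⟩, ⟨p1,p2⟩, q1, q2⟩ hy
    simp only [Finset.mem_sigma, Finset.HasAntidiagonal.mem_antidiagonal, and_true, true_and] at hy ⊢
    omega
  · rintro ⟨⟨p1,p2⟩, ⟨q1,q2⟩, r1, r2⟩ hx
    simp only [Finset.mem_sigma, Finset.HasAntidiagonal.mem_antidiagonal] at hx
    ext <;> simp <;> omega
  · rintro ⟨⟨r1,r2⟩, ⟨p1,p2⟩, q1, q2⟩ hy
    simp only [Finset.mem_sigma, Finset.HasAntidiagonal.mem_antidiagonal] at hy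
    ext <;> simp <;> omega
  · rintro ⟨⟨p1,p2⟩, ⟨q1,q2⟩, r1, r2⟩ hx
    rfl

lemma sum3_reindexL (t : ℕ) (G : ℕ → ℕ → ℕ → ℕ → M) :
    (∑ p ∈ antidiagonal t, ∑ q ∈ antidiagonal p.2, ∑ r ∈ antidiagonal q.1, G p.1 r.1 r.2 q.2)
      = ∑ r ∈ antidiagonal t, ∑ p ∈ antidiagonal r.2, ∑ q ∈ antidiagonal p.2,
          G p.1 r.1 q.1 q.2 := by
  have hL : (∑ p ∈ antidiagonal t, ∑ q ∈ antidiagonal p.2, ∑ r ∈ antidiagonal q.1,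
        G p.1 r.1 r.2 q.2)
      = ∑ x ∈ (antidiagonal t).sigma (fun p => (antidiagonal p.2).sigma (fun q =>
          antidiagonal q.1)), G x.1.1 x.2.2.1 x.2.2.2 x.2.1.2 := by
    simp only [Finset.sum_sigma]
  have hR : (∑ r ∈ antidiagonal t, ∑ p ∈ antidiagonal r.2, ∑ q ∈ antidiagonal p.2,
        G p.1 r.1 q.1 q.2)
      = ∑ y ∈ (antidiagonal t).sigma (fun r => (antidiagonal r.2).sigma (fun p =>
          antidiagonal p.2)), G y.2.1.1 y.1.1 y.2.2.1 y.2.2.2 := by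
    simp only [Finset.sum_sigma]
  rw [hL, hR]
  refine Finset.sum_nbij'
    (fun x => ⟨(x.2.2.1, x.1.1 + x.2.2.2 + x.2.1.2), (x.1.1, x.2.2.2 + x.2.1.2),
      (x.2.2.2, x.2.1.2)⟩)
    (fun y => ⟨(y.2.1.1, y.1.1 + y.2.2.1 + y.2.2.2), (y.1.1 + y.2.2.1, y.2.2.2),
      (y.1.1, y.2.2.1)⟩)
    ?_ ?_ ?_ ?_ ?_
  · rintro ⟨⟨p1,p2⟩, ⟨q1,q2⟩, r1, r2⟩ hx
    simp only [Finset.mem_sigma, Finset.HasAntidiagonal.mem_antidiagonal, and_true, true_and] at hx ⊢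
    omega
  · rintro ⟨⟨r1,r2⟩, ⟨p1,p2⟩, q1, q2⟩ hy
    simp only [Finset.mem_sigma, Finset.HasAntidiagonal.mem_antidiagonal, and_true, true_and] at hy ⊢
    omega
  · rintro ⟨⟨p1,p2⟩, ⟨q1,q2⟩, r1, r2⟩ hx
    simp only [Finset.mem_sigma, Finset.HasAntidiagonal.mem_antidiagonal] at hx
    ext <;> simp <;> omega
  · rintro ⟨⟨r1,r2⟩, ⟨p1,p2⟩, q1, q2⟩ hy
    simp only [Finset.mem_sigma, Finset.HasAntidiagonal.mem_antidiagonal] at hy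
    ext <;> simp <;> omega
  · rintro ⟨⟨p1,p2⟩, ⟨q1,q2⟩, r1, r2⟩ hx
    rfl

end Reindex3

namespace StarProd
variable {K A : Type*} [Field K] [CommRing A] [Algebra K A] (D : StarProd K A)

lemma mul_mapC_right (c : PowerSeries K) (f h : PowerSeries A) :
    D.mul f (PowerSeries.map (algebraMap K A) c * h)
      = PowerSeries.map (algebraMap K A) c * D.mul f h := by
  ext t
  rw [coeff_mul', PowerSeries.coeff_mul]
  have hL : ∑ p ∈ antidiagonal t, ∑ q ∈ antidiagonal p.2,
      D.C p.1 (PowerSeries.coeff q.1 f)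
        (PowerSeries.coeff q.2 (PowerSeries.map (algebraMap K A) c * h))
      = ∑ p ∈ antidiagonal t, ∑ q ∈ antidiagonal p.2, ∑ r ∈ antidiagonal q.2,
          PowerSeries.coeff r.1 c •
            D.C p.1 (PowerSeries.coeff q.1 f) (PowerSeries.coeff r.2 h) := by
    refine Finset.sum_congr rfl fun p _ => Finset.sum_congr rfl fun q _ => ?_
    rw [PowerSeries.coeff_mul, map_sum]
    refine Finset.sum_congr rfl fun r _ => ?_
    rw [PowerSeries.coeff_map, ← Algebra.smul_def, map_smul]
  rw [hL, sum3_reindexR t (fun w x y z => PowerSeries.coeff y c •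
      D.C w (PowerSeries.coeff x f) (PowerSeries.coeff z h))]
  refine Finset.sum_congr rfl fun r _ => ?_
  rw [PowerSeries.coeff_map, ← Algebra.smul_def, coeff_mul', Finset.smul_sum]
  refine Finset.sum_congr rfl fun p _ => ?_
  rw [Finset.smul_sum]

lemma mul_mapC_left (c : PowerSeries K) (f h : PowerSeries A) :
    D.mul (PowerSeries.map (algebraMap K A) c * f) h
      = PowerSeries.map (algebraMap K A) c * D.mul f h := by
  ext t
  rw [coeff_mul', PowerSeries.coeff_mul]
  have hL : ∑ p ∈ antidiagonal t, ∑ q ∈ antidiagonal p.2,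
      D.C p.1 (PowerSeries.coeff q.1 (PowerSeries.map (algebraMap K A) c * f))
        (PowerSeries.coeff q.2 h)
      = ∑ p ∈ antidiagonal t, ∑ q ∈ antidiagonal p.2, ∑ r ∈ antidiagonal q.1,
          PowerSeries.coeff r.1 c •
            D.C p.1 (PowerSeries.coeff r.2 f) (PowerSeries.coeff q.2 h) := by
    refine Finset.sum_congr rfl fun p _ => Finset.sum_congr rfl fun q _ => ?_
    rw [PowerSeries.coeff_mul, map_sum, LinearMap.sum_apply]
    refine Finset.sum_congr rfl fun r _ => ?_
    rw [PowerSeries.coeff_map, ← Algebra.smul_def, map_smul, LinearMap.smul_apply]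
  rw [hL, sum3_reindexL t (fun w x y z => PowerSeries.coeff x c •
      D.C w (PowerSeries.coeff y f) (PowerSeries.coeff z h))]
  refine Finset.sum_congr rfl fun r _ => ?_
  rw [PowerSeries.coeff_map, ← Algebra.smul_def, coeff_mul', Finset.smul_sum]
  refine Finset.sum_congr rfl fun p _ => ?_
  rw [Finset.smul_sum]

end StarProd
section Dop
variable {K A : Type*} [Field K] [CommRing A] [Algebra K A]

lemma quot_smul_eq (I : Ideal A) (c : PowerSeries K) (a : PowerSeries A) :
    c • (Ideal.Quotient.mk (idealSeries I) a)
      = Ideal.Quotient.mk (idealSeries I) (PowerSeries.map (algebraMap K A) c * a) := by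
  have h1 : c • a = PowerSeries.map (algebraMap K A) c * a := by
    rw [Algebra.smul_def, PowerSeries.algebraMap_apply'']
  rw [← h1]
  exact (Submodule.Quotient.mk_smul (idealSeries I) c a).symm

noncomputable def Dop (D : StarProd K A) (I : Ideal A) (h : PowerSeries A)
    (hh : ∀ g ∈ idealSeries I, D.mul g h ∈ idealSeries I) :
    Module.End (PowerSeries K) (PowerSeries A ⧸ idealSeries I) where
  toFun x := Quotient.liftOn' x
    (fun f => Ideal.Quotient.mk (idealSeries I) (D.mul f h))
    (by
      intro a b hab
      have hsub : a - b ∈ idealSeries I := (Submodule.quotientRel_def _).mp hab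
      beta_reduce
      rw [Ideal.Quotient.eq, ← StarProd.mul_sub_left]
      exact hh _ hsub)
  map_add' x y := by
    obtain ⟨a, rfl⟩ := Ideal.Quotient.mk_surjective x
    obtain ⟨b, rfl⟩ := Ideal.Quotient.mk_surjective y
    rw [← map_add]
    show Ideal.Quotient.mk (idealSeries I) (D.mul (a + b) h)
      = Ideal.Quotient.mk (idealSeries I) (D.mul a h)
        + Ideal.Quotient.mk (idealSeries I) (D.mul b h)
    rw [StarProd.mul_add_left, map_add]
  map_smul' c x := by
    obtain ⟨a, rfl⟩ := Ideal.Quotient.mk_surjective x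
    rw [RingHom.id_apply, quot_smul_eq]
    show Ideal.Quotient.mk (idealSeries I)
        (D.mul (PowerSeries.map (algebraMap K A) c * a) h)
      = c • Ideal.Quotient.mk (idealSeries I) (D.mul a h)
    rw [StarProd.mul_mapC_left, quot_smul_eq]

lemma Dop_mk (D : StarProd K A) (I : Ideal A) (h : PowerSeries A)
    (hh : ∀ g ∈ idealSeries I, D.mul g h ∈ idealSeries I) (f : PowerSeries A) :
    Dop D I h hh (Ideal.Quotient.mk (idealSeries I) f)
      = Ideal.Quotient.mk (idealSeries I) (D.mul f h) := rfl

end Dop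

/-- Let `*` be adapted to the ideal `I` with canonical representation `ρ` on
`Q = A[[ν]]/I[[ν]]`, and let `N_*(I) = {h : I[[ν]] * h ⊆ I[[ν]]}` be the `*`-idealizer.
Then (a) `N_*(I)` is a unital subalgebra of `(A[[ν]],*)` containing `I[[ν]]` as a
two-sided ideal, and (b) the commutant of `ρ` consists exactly of the operators
`D_h : f + I[[ν]] ↦ f*h + I[[ν]]` with `h ∈ N_*(I)`, two such agreeing iff
`h - h' ∈ I[[ν]]`, and composition corresponds to the opposite multiplication
(`D_{h*h'} = D_{h'} ∘ D_h`), i.e. the commutant is anti-isomorphic to `N_*(I)/I[[ν]]`. -/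
theorem statement3 {K A : Type*} [Field K] [CharZero K] [CommRing A] [Algebra K A]
    (D : StarProd K A) (I : Ideal A)
    (hadapt : ∀ f g : PowerSeries A, g ∈ idealSeries I → D.mul f g ∈ idealSeries I)
    (ρ : PowerSeries A → Module.End (PowerSeries K) (PowerSeries A ⧸ idealSeries I))
    (hρ : ∀ f g : PowerSeries A,
      ρ f (Ideal.Quotient.mk (idealSeries I) g) = Ideal.Quotient.mk (idealSeries I) (D.mul f g)) :
    -- (a) `N_*(I)` is a unital subalgebra containing `I[[ν]]` as a two-sided ideal
    ((1 : PowerSeries A) ∈ {h | ∀ g ∈ idealSeries I, D.mul g h ∈ idealSeries I}) ∧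
    (∀ h₁ h₂, h₁ ∈ {h | ∀ g ∈ idealSeries I, D.mul g h ∈ idealSeries I} →
        h₂ ∈ {h | ∀ g ∈ idealSeries I, D.mul g h ∈ idealSeries I} →
        h₁ + h₂ ∈ {h | ∀ g ∈ idealSeries I, D.mul g h ∈ idealSeries I} ∧
        D.mul h₁ h₂ ∈ {h | ∀ g ∈ idealSeries I, D.mul g h ∈ idealSeries I}) ∧
    (∀ (c : PowerSeries K) h, h ∈ {h | ∀ g ∈ idealSeries I, D.mul g h ∈ idealSeries I} →
        PowerSeries.map (algebraMap K A) c * h ∈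
          {h | ∀ g ∈ idealSeries I, D.mul g h ∈ idealSeries I}) ∧
    (∀ g ∈ idealSeries I, g ∈ {h | ∀ g' ∈ idealSeries I, D.mul g' h ∈ idealSeries I}) ∧
    (∀ h ∈ {h | ∀ g ∈ idealSeries I, D.mul g h ∈ idealSeries I}, ∀ g ∈ idealSeries I,
        D.mul h g ∈ idealSeries I ∧ D.mul g h ∈ idealSeries I) ∧
    -- (b) the commutant is `{D_h : h ∈ N_*(I)}`, anti-isomorphic to `N_*(I)/I[[ν]]`
    (∀ h ∈ {h | ∀ g ∈ idealSeries I, D.mul g h ∈ idealSeries I},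
        ∃ Dh : Module.End (PowerSeries K) (PowerSeries A ⧸ idealSeries I),
          (∀ f : PowerSeries A,
            Dh (Ideal.Quotient.mk (idealSeries I) f) = Ideal.Quotient.mk (idealSeries I) (D.mul f h)) ∧
          (∀ f : PowerSeries A, Dh * ρ f = ρ f * Dh)) ∧
    (∀ Dd : Module.End (PowerSeries K) (PowerSeries A ⧸ idealSeries I),
        (∀ f : PowerSeries A, Dd * ρ f = ρ f * Dd) →
        ∃ h ∈ {h | ∀ g ∈ idealSeries I, D.mul g h ∈ idealSeries I},
          ∀ f : PowerSeries A,
            Dd (Ideal.Quotient.mk (idealSeries I) f) = Ideal.Quotient.mk (idealSeries I) (D.mul f h)) ∧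
    (∀ h ∈ {h | ∀ g ∈ idealSeries I, D.mul g h ∈ idealSeries I},
      ∀ h' ∈ {h | ∀ g ∈ idealSeries I, D.mul g h ∈ idealSeries I},
        ((∀ f : PowerSeries A,
            Ideal.Quotient.mk (idealSeries I) (D.mul f h)
              = Ideal.Quotient.mk (idealSeries I) (D.mul f h')) ↔ h - h' ∈ idealSeries I)) ∧
    (∀ (h h' : PowerSeries A)
        (Dh Dh' : Module.End (PowerSeries K) (PowerSeries A ⧸ idealSeries I)),
        (∀ f : PowerSeries A,
          Dh (Ideal.Quotient.mk (idealSeries I) f) = Ideal.Quotient.mk (idealSeries I) (D.mul f h)) →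
        (∀ f : PowerSeries A,
          Dh' (Ideal.Quotient.mk (idealSeries I) f) = Ideal.Quotient.mk (idealSeries I) (D.mul f h')) →
        ∀ f : PowerSeries A,
          (Dh' * Dh) (Ideal.Quotient.mk (idealSeries I) f)
            = Ideal.Quotient.mk (idealSeries I) (D.mul f (D.mul h h'))) := by

  set N := {h | ∀ g ∈ idealSeries I, D.mul g h ∈ idealSeries I} with hN
  refine ⟨?_, ?_, ?_, ?_, ?_, ?_, ?_, ?_, ?_⟩
  · -- 1 ∈ N
    intro g hg
    rw [D.mul_one']; exact hg
  · -- closed under + and *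
    intro h₁ h₂ hh₁ hh₂
    constructor
    · intro g hg
      rw [D.mul_add_right]
      exact (idealSeries I).add_mem (hh₁ g hg) (hh₂ g hg)
    · intro g hg
      rw [← D.mul_assoc']
      exact hh₂ _ (hh₁ g hg)
  · -- closed under scalars
    intro c h hh g hg
    rw [D.mul_mapC_right]
    exact Ideal.mul_mem_left _ _ (hh g hg)
  · -- I[[ν]] ⊆ N
    intro g hg g' _
    exact hadapt g' g hg
  · -- two-sided ideal
    intro h _ g hg
    exact ⟨hadapt h g hg, ‹h ∈ N› g hg⟩
  · -- existence of D_h in the commutant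
    intro h hh
    refine ⟨Dop D I h hh, fun f => Dop_mk D I h hh f, ?_⟩
    intro f
    apply LinearMap.ext
    intro x
    obtain ⟨a, rfl⟩ := Ideal.Quotient.mk_surjective x
    rw [Module.End.mul_apply, Module.End.mul_apply, hρ, Dop_mk, Dop_mk, hρ, D.mul_assoc']
  · -- every commutant element is some D_h
    intro Dd hDd
    obtain ⟨h, hh⟩ := Ideal.Quotient.mk_surjective (Dd (Ideal.Quotient.mk (idealSeries I) 1))
    have key : ∀ f : PowerSeries A,
        Dd (Ideal.Quotient.mk (idealSeries I) f)
          = Ideal.Quotient.mk (idealSeries I) (D.mul f h) := by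
      intro f
      have h1 := congrArg (fun φ : Module.End (PowerSeries K) (PowerSeries A ⧸ idealSeries I) =>
        φ (Ideal.Quotient.mk (idealSeries I) 1)) (hDd f)
      simp only [Module.End.mul_apply] at h1
      rw [hρ, D.mul_one'] at h1
      rw [h1, ← hh, hρ]
    refine ⟨h, ?_, key⟩
    intro g hg
    have h2 : Ideal.Quotient.mk (idealSeries I) (D.mul g h) = 0 := by
      rw [← key g, Ideal.Quotient.eq_zero_iff_mem.mpr hg, map_zero]
    exact Ideal.Quotient.eq_zero_iff_mem.mp h2
  · -- D_h = D_h' iff h - h' ∈ I[[ν]]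
    intro h hh h' hh'
    constructor
    · intro hfa
      have h1 := hfa 1
      rw [D.one_mul', D.one_mul'] at h1
      exact Ideal.Quotient.eq.mp h1
    · intro hmem f
      rw [Ideal.Quotient.eq, ← D.mul_sub_right]
      exact hadapt f _ hmem
  · -- composition is opposite multiplication
    intro h h' Dh Dh' hDh hDh' f
    rw [Module.End.mul_apply, hDh, hDh', D.mul_assoc']
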